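/- arXiv:1203.1292 — 7 statements merged into one kernel-verified Lean document; each statement's English description precedes it below -/
import Mathlib

section
/- A symmetrizable operator X on E extends to a bounded operator on H. More precisely, if E is a dense subspace of a Hilbert space H with inner product ⟨·,·⟩, E is itself a Banach space with norm |·|_E satisfying ‖f‖ ≤ C|f|_E, and X : E → E is bounded with ⟨Xf,g⟩ = ⟨f,Xg⟩ for all f,g ∈ E, then there exists a constant M such that ‖Xf‖ ≤ M‖f‖ for all f ∈ E, so X extends to a bounded self-adjoint operator on H. -/
lemma key_step {E H : Type*} [NormedAddCommGroup E] [NormedSpace ℂ E]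
    [NormedAddCommGroup H] [InnerProductSpace ℂ H]
    (ι : E →L[ℂ] H) (Y : E →L[ℂ] E)
    (hs : ∀ f g : E, (inner ℂ (ι (Y f)) (ι g) : ℂ) = inner ℂ (ι f) (ι (Y g))) (f : E) :
    ‖ι (Y f)‖ ^ 2 ≤ ‖ι f‖ * ‖ι (Y (Y f))‖ := by
  have h1 : (inner ℂ (ι (Y f)) (ι (Y f)) : ℂ) = (‖ι (Y f)‖ : ℂ) ^ 2 :=
    inner_self_eq_norm_sq_to_K _
  calc ‖ι (Y f)‖ ^ 2 = ‖(inner ℂ (ι (Y f)) (ι (Y f)) : ℂ)‖ := by rw [h1]; simp [norm_pow]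
    _ = ‖(inner ℂ (ι f) (ι (Y (Y f))) : ℂ)‖ := by rw [hs f (Y f)]
    _ ≤ ‖ι f‖ * ‖ι (Y (Y f))‖ := norm_inner_le_norm _ _

lemma pow_symm {E H : Type*} [NormedAddCommGroup E] [NormedSpace ℂ E]
    [NormedAddCommGroup H] [InnerProductSpace ℂ H]
    (ι : E →L[ℂ] H) (X : E →L[ℂ] E)
    (hs : ∀ f g : E, (inner ℂ (ι (X f)) (ι g) : ℂ) = inner ℂ (ι f) (ι (X g))) (n : ℕ) :
    ∀ f g : E, (inner ℂ (ι ((X ^ n) f)) (ι g) : ℂ) = inner ℂ (ι f) (ι ((X ^ n) g)) := by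
  induction n with
  | zero => intro f g; simp
  | succ n ih =>
    intro f g
    have hl : (X ^ (n + 1)) f = (X ^ n) (X f) := by rw [pow_succ]; rfl
    have hr : (X ^ (n + 1)) g = X ((X ^ n) g) := by rw [pow_succ']; rfl
    rw [hl, hr, ih (X f) g, hs f ((X ^ n) g)]

lemma main_ind {E H : Type*} [NormedAddCommGroup E] [NormedSpace ℂ E]
    [NormedAddCommGroup H] [InnerProductSpace ℂ H]
    (ι : E →L[ℂ] H) (X : E →L[ℂ] E)
    (hs : ∀ f g : E, (inner ℂ (ι (X f)) (ι g) : ℂ) = inner ℂ (ι f) (ι (X g))) (n : ℕ) (f : E) :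
    ‖ι (X f)‖ ^ (2 ^ n) ≤ ‖ι f‖ ^ (2 ^ n - 1) * ‖ι ((X ^ (2 ^ n)) f)‖ := by
  induction n generalizing f with
  | zero => simp
  | succ n ih =>
    have h1 : (1:ℕ) ≤ 2 ^ n := Nat.one_le_two_pow
    have key := key_step ι (X ^ (2 ^ n)) (pow_symm ι X hs (2 ^ n)) f
    have hYY : (X ^ (2 ^ n)) ((X ^ (2 ^ n)) f) = (X ^ (2 ^ (n + 1))) f := by
      have : (X ^ (2 ^ (n+1))) = (X ^ (2 ^ n)) * (X ^ (2 ^ n)) := by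
        rw [← pow_add]; congr 1; omega
      rw [this]; rfl
    rw [hYY] at key
    have ihsq : (‖ι (X f)‖ ^ (2 ^ n)) ^ 2 ≤ (‖ι f‖ ^ (2 ^ n - 1) * ‖ι ((X ^ (2 ^ n)) f)‖) ^ 2 := by
      apply pow_le_pow_left₀ (by positivity) (ih f)
    have e1 : (‖ι (X f)‖ ^ (2 ^ n)) ^ 2 = ‖ι (X f)‖ ^ (2 ^ (n + 1)) := by
      rw [← pow_mul, pow_succ]
    have e2 : (‖ι f‖ ^ (2 ^ n - 1)) ^ 2 = ‖ι f‖ ^ (2 ^ (n + 1) - 2) := by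
      rw [← pow_mul]
      congr 1
      omega
    calc ‖ι (X f)‖ ^ (2 ^ (n + 1)) = (‖ι (X f)‖ ^ (2 ^ n)) ^ 2 := e1.symm
      _ ≤ (‖ι f‖ ^ (2 ^ n - 1) * ‖ι ((X ^ (2 ^ n)) f)‖) ^ 2 := ihsq
      _ = ‖ι f‖ ^ (2 ^ (n + 1) - 2) * ‖ι ((X ^ (2 ^ n)) f)‖ ^ 2 := by rw [mul_pow, e2]
      _ ≤ ‖ι f‖ ^ (2 ^ (n + 1) - 2) * (‖ι f‖ * ‖ι ((X ^ (2 ^ (n + 1))) f)‖) := by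
          apply mul_le_mul_of_nonneg_left key (by positivity)
      _ = ‖ι f‖ ^ (2 ^ (n + 1) - 1) * ‖ι ((X ^ (2 ^ (n + 1))) f)‖ := by
          rw [← mul_assoc, ← pow_succ]
          congr 2
          have : (2:ℕ) ≤ 2 ^ (n + 1) := by
            calc (2:ℕ) = 2 ^ 1 := rfl
            _ ≤ 2 ^ (n + 1) := Nat.pow_le_pow_right (by norm_num) (by omega)
          omega

lemma sym_bound {E H : Type*} [NormedAddCommGroup E] [NormedSpace ℂ E]
    [NormedAddCommGroup H] [InnerProductSpace ℂ H]
    (ι : E →L[ℂ] H) (hinj : Function.Injective ι) (X : E →L[ℂ] E)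
    (hsymm : ∀ f g : E, (inner ℂ (ι (X f)) (ι g) : ℂ) = inner ℂ (ι f) (ι (X g))) (f : E) :
    ‖ι (X f)‖ ≤ ‖X‖ * ‖ι f‖ := by
  by_contra hcon
  push_neg at hcon
  have hA : 0 < ‖ι (X f)‖ := lt_of_le_of_lt (by positivity) hcon
  have hf : f ≠ 0 := by rintro rfl; simp at hA
  have hXpos : 0 < ‖X‖ := by
    rcases (norm_nonneg X).eq_or_lt with h | h
    · exfalso
      have : X = 0 := by rwa [eq_comm, norm_eq_zero] at h
      rw [this] at hA; simp at hA
    · exact h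
  have hιf : 0 < ‖ι f‖ := by
    rcases (norm_nonneg (ι f)).eq_or_lt with h | h
    · exfalso
      apply hf
      apply hinj
      rw [map_zero, ← norm_eq_zero.mp h.symm]
    · exact h
  set B := ‖X‖ * ‖ι f‖ with hB
  have hBpos : 0 < B := mul_pos hXpos hιf
  set r := ‖ι (X f)‖ / B with hr
  have hr1 : 1 < r := (one_lt_div hBpos).mpr hcon
  set K := ‖ι‖ * ‖f‖ / ‖ι f‖ with hKdef
  have hK : ∀ n : ℕ, r ^ (2 ^ n) ≤ K := by
    intro n
    have h1 := main_ind ι X hsymm n f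
    have h2 : ‖ι ((X ^ (2 ^ n)) f)‖ ≤ ‖ι‖ * (‖X‖ ^ (2 ^ n) * ‖f‖) := by
      calc ‖ι ((X ^ (2 ^ n)) f)‖ ≤ ‖ι‖ * ‖(X ^ (2 ^ n)) f‖ := ι.le_opNorm _
        _ ≤ ‖ι‖ * (‖X ^ (2 ^ n)‖ * ‖f‖) := by
            gcongr; exact (X ^ (2 ^ n)).le_opNorm f
        _ ≤ ‖ι‖ * (‖X‖ ^ (2 ^ n) * ‖f‖) := by
            gcongr
            exact norm_pow_le' X (by positivity)
    have hp : ‖ι f‖ ^ (2 ^ n) = ‖ι f‖ ^ (2 ^ n - 1) * ‖ι f‖ := by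
      rw [← pow_succ]; congr 1; have : (1:ℕ) ≤ 2 ^ n := Nat.one_le_two_pow; omega
    rw [hr, div_pow, div_le_iff₀ (by positivity)]
    have hKB : K * B ^ (2 ^ n) = ‖ι f‖ ^ (2 ^ n - 1) * (‖ι‖ * (‖X‖ ^ (2 ^ n) * ‖f‖)) := by
      rw [hKdef, hB, mul_pow, hp]
      field_simp
    rw [hKB]
    calc ‖ι (X f)‖ ^ (2 ^ n) ≤ ‖ι f‖ ^ (2 ^ n - 1) * ‖ι ((X ^ (2 ^ n)) f)‖ := h1
      _ ≤ ‖ι f‖ ^ (2 ^ n - 1) * (‖ι‖ * (‖X‖ ^ (2 ^ n) * ‖f‖)) := by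
          apply mul_le_mul_of_nonneg_left h2 (by positivity)
  obtain ⟨k, hk⟩ := pow_unbounded_of_one_lt K hr1
  have h3 : r ^ k ≤ r ^ (2 ^ k) := pow_le_pow_right₀ hr1.le (Nat.lt_two_pow_self (n := k)).le
  have h4 := hK k
  linarith

/-- A symmetrizable operator `X` on `E` (a dense, continuously included
Banach subspace `ι : E →L[ℂ] H` of a Hilbert space `H`) is bounded with respect to the
`H`-norm, and hence extends to a bounded self-adjoint operator on `H`. -/
theorem symmetrizable_bounded_and_extends
    {E H : Type*} [NormedAddCommGroup E] [NormedSpace ℂ E] [CompleteSpace E]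
    [NormedAddCommGroup H] [InnerProductSpace ℂ H] [CompleteSpace H]
    (ι : E →L[ℂ] H) (hinj : Function.Injective ι) (hdense : DenseRange ι)
    (X : E →L[ℂ] E)
    (hsymm : ∀ f g : E, (inner ℂ (ι (X f)) (ι g) : ℂ) = inner ℂ (ι f) (ι (X g))) :
    (∃ M : ℝ, ∀ f : E, ‖ι (X f)‖ ≤ M * ‖ι f‖) ∧
    ∃ Xbar : H →L[ℂ] H, IsSelfAdjoint Xbar ∧ ∀ f : E, Xbar (ι f) = ι (X f) := by
  have hbound : ∀ f : E, ‖ι (X f)‖ ≤ ‖X‖ * ‖ι f‖ := sym_bound ι hinj X hsymm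
  refine ⟨⟨‖X‖, hbound⟩, ?_⟩
  set p : Submodule ℂ H := LinearMap.range (ι : E →ₗ[ℂ] H) with hpdef
  let e : E ≃ₗ[ℂ] p := LinearEquiv.ofInjective (ι : E →ₗ[ℂ] H) hinj
  have h0 : ∀ f : E, ((e f : p) : H) = ι f := fun f => rfl
  have hesymm : ∀ x : p, ι (e.symm x) = (x : H) := by
    intro x
    rw [← h0 (e.symm x), e.apply_symm_apply]
  let T0 : p →L[ℂ] H :=
    LinearMap.mkContinuous
      (((ι.comp X : E →L[ℂ] H) : E →ₗ[ℂ] H).comp (e.symm : p →ₗ[ℂ] E)) ‖X‖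
      (fun x => by
        show ‖ι (X (e.symm x))‖ ≤ ‖X‖ * ‖x‖
        have : ‖(x : p)‖ = ‖(x : H)‖ := rfl
        rw [this, ← hesymm x]
        exact hbound _)
  have hT0 : ∀ x : p, T0 x = ι (X (e.symm x)) := fun x => rfl
  have hd : DenseRange (p.subtypeL) := by
    have hrange : Set.range (p.subtypeL) = Set.range ι := by
      ext x
      constructor
      · rintro ⟨⟨y, hy⟩, rfl⟩
        obtain ⟨f, rfl⟩ := hy
        exact ⟨f, rfl⟩
      · rintro ⟨f, rfl⟩
        exact ⟨⟨ι f, ⟨f, rfl⟩⟩, rfl⟩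
    rw [DenseRange, hrange]
    exact hdense
  have hu : IsUniformInducing (p.subtypeL) := isometry_subtype_coe.isUniformInducing
  set Xbar := T0.extend p.subtypeL with hXbar
  have hext : ∀ f : E, Xbar (ι f) = ι (X f) := by
    intro f
    have h1 := ContinuousLinearMap.extend_eq (f := T0) (e := p.subtypeL) hd hu (e f)
    have h2 : p.subtypeL (e f) = ι f := h0 f
    rw [h2] at h1
    rw [hT0, e.symm_apply_apply] at h1
    exact h1
  refine ⟨Xbar, ?_, hext⟩
  rw [ContinuousLinearMap.isSelfAdjoint_iff_isSymmetric]
  intro x y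
  have hcont1 : Continuous fun q : H × H => (inner ℂ (Xbar q.1) q.2 : ℂ) :=
    (Xbar.continuous.comp continuous_fst).inner continuous_snd
  have hcont2 : Continuous fun q : H × H => (inner ℂ q.1 (Xbar q.2) : ℂ) :=
    continuous_fst.inner (Xbar.continuous.comp continuous_snd)
  have hdense2 : Dense (Set.range ι ×ˢ Set.range ι) := hdense.prod hdense
  have heq := hcont1.ext_on hdense2 hcont2 ?_
  · exact congrFun heq (x, y)
  · rintro ⟨u, v⟩ ⟨⟨f, rfl⟩, ⟨g, rfl⟩⟩
    simp only
    rw [hext, hext]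
    exact hsymm f g
end

section
/- Let E be a Hilbert space and A a positive (nonnegative self-adjoint) bounded operator on E. If X is a bounded operator on E with AX = X*A, then there exists a unique bounded self-adjoint operator Y on E such that A^{1/2} X = Y A^{1/2}, provided A is injective. -/
open ContinuousLinearMap

open scoped InnerProductSpace

section Aux

variable {E : Type*} [NormedAddCommGroup E] [InnerProductSpace ℂ E] [CompleteSpace E]

/-- Key analytic bound: `‖S (X x)‖ ≤ ‖X‖ * ‖S x‖`. -/
lemma dieudonne_key_bound (A X S : E →L[ℂ] E)
    (hSsa : IsSelfAdjoint S) (hS2 : S.comp S = A)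
    (hX : A.comp X = (adjoint X).comp A)
    (hSinj : Function.Injective S) (x : E) :
    ‖S (X x)‖ ≤ ‖X‖ * ‖S x‖ := by
  have hsymm : ∀ u v : E, ⟪S u, v⟫_ℂ = ⟪u, S v⟫_ℂ :=
    (isSelfAdjoint_iff_isSymmetric.mp hSsa)
  have hA2 : ∀ u, S (S u) = A u := fun u => by
    rw [← ContinuousLinearMap.comp_apply, hS2]
  have hX' : A * X = star X * A := by
    rw [star_eq_adjoint]; exact hX
  have hXn : ∀ n : ℕ, A * X ^ n = (star X) ^ n * A := by
    intro n
    induction n with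
    | zero => simp
    | succ n ih =>
      rw [pow_succ, ← mul_assoc, ih, mul_assoc, hX', ← mul_assoc, ← pow_succ]
  -- the basic Cauchy-Schwarz step
  have step : ∀ (k : ℕ), ‖S ((X ^ k) x)‖ ^ 2 ≤ ‖S ((X ^ (2 * k)) x)‖ * ‖S x‖ := by
    intro k
    have hAX : A ((X ^ k) x) = ((star X) ^ k) (A x) := by
      have := congrArg (fun T : E →L[ℂ] E => T x) (hXn k)
      simpa [ContinuousLinearMap.mul_apply] using this
    have h1 : ⟪S ((X ^ k) x), S ((X ^ k) x)⟫_ℂ = ⟪S ((X ^ (2 * k)) x), S x⟫_ℂ := by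
      calc ⟪S ((X ^ k) x), S ((X ^ k) x)⟫_ℂ
          = ⟪(X ^ k) x, S (S ((X ^ k) x))⟫_ℂ := hsymm _ _
        _ = ⟪(X ^ k) x, A ((X ^ k) x)⟫_ℂ := by rw [hA2]
        _ = ⟪(X ^ k) x, ((star X) ^ k) (A x)⟫_ℂ := by rw [hAX]
        _ = ⟪(X ^ k) x, (adjoint (X ^ k)) (A x)⟫_ℂ := by
            rw [← star_eq_adjoint, star_pow]
        _ = ⟪(X ^ k) ((X ^ k) x), A x⟫_ℂ := by
            rw [ContinuousLinearMap.adjoint_inner_right]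
        _ = ⟪(X ^ (2 * k)) x, A x⟫_ℂ := by
            rw [two_mul, pow_add, ContinuousLinearMap.mul_apply]
        _ = ⟪(X ^ (2 * k)) x, S (S x)⟫_ℂ := by rw [hA2]
        _ = ⟪S ((X ^ (2 * k)) x), S x⟫_ℂ := (hsymm _ _).symm
    have h2 : ‖S ((X ^ k) x)‖ ^ 2 = ‖⟪S ((X ^ (2 * k)) x), S x⟫_ℂ‖ := by
      rw [norm_sq_eq_re_inner (𝕜 := ℂ), inner_self_re_eq_norm, h1]
    rw [h2]
    exact norm_inner_le_norm _ _
  by_cases hx0 : S x = 0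
  · have : x = 0 := hSinj (by simpa using hx0)
    subst this
    simp
  have hpos : 0 < ‖S x‖ := norm_pos_iff.mpr hx0
  by_cases hX0 : X = 0
  · subst hX0; simp [norm_nonneg]
  have hXpos : 0 < ‖X‖ := norm_pos_iff.mpr hX0
  set a : ℕ → ℝ := fun n => ‖S ((X ^ (2 ^ n)) x)‖ with ha
  -- iterated inequality
  have hind : ∀ n : ℕ, ‖S (X x)‖ ^ (2 ^ n) * ‖S x‖ ≤ ‖S x‖ ^ (2 ^ n) * a n := by
    intro n
    induction n with
    | zero => simp [ha, mul_comm]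
    | succ n ih =>
      have h1 : (‖S (X x)‖ ^ (2 ^ n) * ‖S x‖) ^ 2 ≤ (‖S x‖ ^ (2 ^ n) * a n) ^ 2 := by
        apply pow_le_pow_left₀ (by positivity) ih
      have h2 : a n ^ 2 ≤ a (n + 1) * ‖S x‖ := by
        have := step (2 ^ n)
        simpa [ha, pow_succ, mul_comm] using this
      have h3 : (‖S (X x)‖ ^ (2 ^ n)) ^ 2 * ‖S x‖ ^ 2 ≤
          (‖S x‖ ^ (2 ^ n)) ^ 2 * (a (n + 1) * ‖S x‖) := by
        calc (‖S (X x)‖ ^ (2 ^ n)) ^ 2 * ‖S x‖ ^ 2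
            = (‖S (X x)‖ ^ (2 ^ n) * ‖S x‖) ^ 2 := by ring
          _ ≤ (‖S x‖ ^ (2 ^ n) * a n) ^ 2 := h1
          _ = (‖S x‖ ^ (2 ^ n)) ^ 2 * a n ^ 2 := by ring
          _ ≤ (‖S x‖ ^ (2 ^ n)) ^ 2 * (a (n + 1) * ‖S x‖) := by
              apply mul_le_mul_of_nonneg_left h2 (by positivity)
    -- cancel one factor of ‖S x‖
      have h4 : ‖S (X x)‖ ^ (2 ^ (n + 1)) * ‖S x‖ * ‖S x‖ ≤
          ‖S x‖ ^ (2 ^ (n + 1)) * a (n + 1) * ‖S x‖ := by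
        calc ‖S (X x)‖ ^ (2 ^ (n + 1)) * ‖S x‖ * ‖S x‖
            = (‖S (X x)‖ ^ (2 ^ n)) ^ 2 * ‖S x‖ ^ 2 := by
              rw [pow_succ 2 n, pow_mul]; ring
          _ ≤ (‖S x‖ ^ (2 ^ n)) ^ 2 * (a (n + 1) * ‖S x‖) := h3
          _ = ‖S x‖ ^ (2 ^ (n + 1)) * a (n + 1) * ‖S x‖ := by
              rw [pow_succ 2 n, pow_mul]; ring
      exact le_of_mul_le_mul_right h4 hpos
  -- trivial bound on `a n`
  have habound : ∀ n : ℕ, a n ≤ ‖S‖ * ‖X‖ ^ (2 ^ n) * ‖x‖ := by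
    intro n
    calc a n ≤ ‖S‖ * ‖(X ^ (2 ^ n)) x‖ := S.le_opNorm _
      _ ≤ ‖S‖ * (‖X ^ (2 ^ n)‖ * ‖x‖) := by
          apply mul_le_mul_of_nonneg_left ((X ^ (2 ^ n)).le_opNorm x) (norm_nonneg S)
      _ ≤ ‖S‖ * (‖X‖ ^ (2 ^ n) * ‖x‖) := by
          apply mul_le_mul_of_nonneg_left _ (norm_nonneg S)
          apply mul_le_mul_of_nonneg_right (norm_pow_le' X (by positivity)) (norm_nonneg x)
      _ = ‖S‖ * ‖X‖ ^ (2 ^ n) * ‖x‖ := by ring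
  set q : ℝ := ‖S (X x)‖ / (‖X‖ * ‖S x‖) with hq
  set C : ℝ := ‖S‖ * ‖x‖ / ‖S x‖ with hC
  have hqC : ∀ n : ℕ, q ^ (2 ^ n) ≤ C := by
    intro n
    rw [hq, div_pow, div_le_iff₀ (by positivity)]
    rw [hC, div_mul_eq_mul_div, le_div_iff₀ hpos]
    calc ‖S (X x)‖ ^ 2 ^ n * ‖S x‖ ≤ ‖S x‖ ^ 2 ^ n * a n := hind n
      _ ≤ ‖S x‖ ^ 2 ^ n * (‖S‖ * ‖X‖ ^ (2 ^ n) * ‖x‖) := by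
          apply mul_le_mul_of_nonneg_left (habound n) (by positivity)
      _ = ‖S‖ * ‖x‖ * (‖X‖ * ‖S x‖) ^ 2 ^ n := by rw [mul_pow]; ring
  -- conclude q ≤ 1
  by_contra hcon
  push_neg at hcon
  have hq1 : 1 < q := by
    rw [hq, lt_div_iff₀ (by positivity), one_mul]
    exact hcon
  obtain ⟨n, hn⟩ := pow_unbounded_of_one_lt C hq1
  have h5 : q ^ n ≤ q ^ (2 ^ n) :=
    pow_le_pow_right₀ (le_of_lt hq1) (Nat.lt_two_pow_self).le
  exact absurd ((h5.trans (hqC n)).trans_lt hn) (lt_irrefl _)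

end Aux

/-- Dieudonné: if `A` is a positive injective operator on a Hilbert space
`E`, `S = A^{1/2}` its positive square root, and `X` satisfies `A X = X* A`, then there is
a unique bounded self-adjoint `Y` with `A^{1/2} X = Y A^{1/2}`. -/
theorem dieudonne_sqrt_intertwine
    {E : Type*} [NormedAddCommGroup E] [InnerProductSpace ℂ E] [CompleteSpace E]
    (A X : E →L[ℂ] E) (hA : A.IsPositive) (hAinj : Function.Injective A)
    (hX : A.comp X = (adjoint X).comp A)
    (S : E →L[ℂ] E) (hS : S.IsPositive) (hS2 : S.comp S = A) :
    ∃! Y : E →L[ℂ] E, IsSelfAdjoint Y ∧ S.comp X = Y.comp S := by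
  have hSsa : IsSelfAdjoint S := hS.isSelfAdjoint
  have hsymm : ∀ u v : E, ⟪S u, v⟫_ℂ = ⟪u, S v⟫_ℂ :=
    (isSelfAdjoint_iff_isSymmetric.mp hSsa)
  have hA2 : ∀ u, S (S u) = A u := fun u => by
    rw [← ContinuousLinearMap.comp_apply, hS2]
  have hSinj : Function.Injective S := by
    intro u v huv
    apply hAinj
    rw [← hA2, ← hA2, huv]
  have hbound : ∀ x, ‖S (X x)‖ ≤ ‖X‖ * ‖S x‖ :=
    dieudonne_key_bound A X S hSsa hS2 hX hSinj
  -- dense range of S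
  set p : Submodule ℂ E := LinearMap.range (S : E →ₗ[ℂ] E) with hp
  have hporth : pᗮ = ⊥ := by
    rw [Submodule.eq_bot_iff]
    intro v hv
    apply hSinj
    rw [map_zero]
    rw [← inner_self_eq_zero (𝕜 := ℂ) (x := S v)]
    have := (Submodule.mem_orthogonal p v).mp hv (S (S v)) ⟨S v, rfl⟩
    rw [hsymm] at this
    exact this
  have hpdense : Dense (p : Set E) := by
    rw [Submodule.dense_iff_topologicalClosure_eq_top,
      Submodule.topologicalClosure_eq_top_iff]
    exact hporth
  have hdenseS : DenseRange (S : E → E) := by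
    have : Set.range (S : E → E) = (p : Set E) := by
      rw [hp]; ext y; simp [LinearMap.mem_range]
    rw [DenseRange, this]
    exact hpdense
  -- uniqueness-by-density helper
  have huniq : ∀ T₁ T₂ : E →L[ℂ] E, T₁.comp S = T₂.comp S → T₁ = T₂ := by
    intro T₁ T₂ h
    ext u
    have : (T₁ : E → E) = T₂ :=
      hdenseS.equalizer T₁.continuous T₂.continuous
        (by funext z; exact congrArg (fun T : E →L[ℂ] E => T z) h)
    exact congrFun this u
  -- construct Y on range of S
  have hdenseSub : DenseRange (p.subtypeL : p →L[ℂ] E) := by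
    have : Set.range (p.subtypeL : p → E) = (p : Set E) := Subtype.range_coe
    rw [DenseRange, this]
    exact hpdense
  have hUI : IsUniformInducing (p.subtypeL : p →L[ℂ] E) :=
    isUniformEmbedding_subtype_val.isUniformInducing
  set e : E ≃ₗ[ℂ] p := LinearEquiv.ofInjective (S : E →ₗ[ℂ] E) hSinj with he
  have he_symm : ∀ x : E, e.symm ⟨S x, ⟨x, rfl⟩⟩ = x := by
    intro x
    apply e.injective
    rw [e.apply_symm_apply]
    rfl
  set g₀ : p →ₗ[ℂ] E := (S.comp X : E →ₗ[ℂ] E) ∘ₗ (e.symm : p →ₗ[ℂ] E) with hg₀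
  have hg₀apply : ∀ x : E, g₀ ⟨S x, ⟨x, rfl⟩⟩ = S (X x) := by
    intro x
    simp only [hg₀, LinearMap.coe_comp, Function.comp_apply, LinearEquiv.coe_coe, he_symm]
    rfl
  have hg₀bound : ∀ y : p, ‖g₀ y‖ ≤ ‖X‖ * ‖y‖ := by
    rintro ⟨y, hy⟩
    obtain ⟨x, rfl⟩ := hy
    show ‖g₀ ⟨S x, ⟨x, rfl⟩⟩‖ ≤ ‖X‖ * ‖(⟨S x, ⟨x, rfl⟩⟩ : p)‖
    rw [hg₀apply x]
    simpa using hbound x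
  set g : p →L[ℂ] E := LinearMap.mkContinuous g₀ ‖X‖ hg₀bound with hg
  set Y : E →L[ℂ] E := g.extend p.subtypeL with hY
  have hYapp : ∀ x : E, Y (S x) = S (X x) := by
    intro x
    have h1 : Y (p.subtypeL ⟨S x, ⟨x, rfl⟩⟩) = g ⟨S x, ⟨x, rfl⟩⟩ :=
      ContinuousLinearMap.extend_eq g hdenseSub hUI _
    have h2 : p.subtypeL ⟨S x, ⟨x, rfl⟩⟩ = S x := rfl
    rw [h2] at h1
    rw [h1]
    exact hg₀apply x
  have hYcomp : S.comp X = Y.comp S := by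
    ext x
    simp only [ContinuousLinearMap.comp_apply]
    exact (hYapp x).symm
  -- self-adjointness of Y
  have hsymY0 : ∀ x y : E, ⟪Y (S x), S y⟫_ℂ = ⟪S x, Y (S y)⟫_ℂ := by
    intro x y
    rw [hYapp, hYapp]
    calc ⟪S (X x), S y⟫_ℂ = ⟪X x, S (S y)⟫_ℂ := hsymm _ _
      _ = ⟪X x, A y⟫_ℂ := by rw [hA2]
      _ = ⟪x, (adjoint X) (A y)⟫_ℂ := by rw [ContinuousLinearMap.adjoint_inner_right]
      _ = ⟪x, A (X y)⟫_ℂ := by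
          rw [← ContinuousLinearMap.comp_apply, ← ContinuousLinearMap.comp_apply, ← hX]
      _ = ⟪x, S (S (X y))⟫_ℂ := by rw [hA2]
      _ = ⟪S x, S (X y)⟫_ℂ := (hsymm _ _).symm
  have hsymY1 : ∀ (u : E) (y : E), ⟪Y u, S y⟫_ℂ = ⟪u, Y (S y)⟫_ℂ := by
    intro u y
    have : (fun u => ⟪Y u, S y⟫_ℂ) = fun u => ⟪u, Y (S y)⟫_ℂ := by
      apply hdenseS.equalizer
      · exact (Y.continuous.inner continuous_const)
      · exact (continuous_id.inner continuous_const)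
      · funext x
        exact hsymY0 x y
    exact congrFun this u
  have hsymY : ∀ u v : E, ⟪Y u, v⟫_ℂ = ⟪u, Y v⟫_ℂ := by
    intro u v
    have : (fun v => ⟪Y u, v⟫_ℂ) = fun v => ⟪u, Y v⟫_ℂ := by
      apply hdenseS.equalizer
      · exact (continuous_const.inner continuous_id)
      · exact (continuous_const.inner Y.continuous)
      · funext y
        exact hsymY1 u y
    exact congrFun this v
  have hYsa : IsSelfAdjoint Y :=
    isSelfAdjoint_iff_isSymmetric.mpr hsymY
  refine ⟨Y, ⟨hYsa, hYcomp⟩, ?_⟩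
  rintro Y' ⟨_, hY'c⟩
  apply huniq
  rw [← hY'c, hYcomp]
end

section
/- The rank-one idempotent f ⊗ Af (with ⟨f,f⟩ = 1) is an orthogonal projection on E (i.e. self-adjoint with respect to [·,·]) if and only if f is an eigenvector of A. -/
open ContinuousLinearMap

/-- The rank-one operator `f ⊗ Af : h ↦ [h, Af] f` on `E`. -/
noncomputable def rankOneAf {E : Type*} [NormedAddCommGroup E] [InnerProductSpace ℂ E]
    [CompleteSpace E] (A : E →L[ℂ] E) (f : E) : E →L[ℂ] E :=
  (innerSL ℂ (A f)).smulRight f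

/-- the rank-one idempotent `f ⊗ Af` (with `⟨f,f⟩ = [A f, f] = 1`) is an
orthogonal projection on `E` (self-adjoint for `[·,·]`) iff `f` is an eigenvector of `A`. -/
theorem rankOneAf_selfAdjoint_iff_eigenvector
    {E : Type*} [NormedAddCommGroup E] [InnerProductSpace ℂ E] [CompleteSpace E]
    (A : E →L[ℂ] E) (hA : A.IsPositive) (hAinj : Function.Injective A)
    (f : E) (hf : (inner ℂ f (A f) : ℂ) = 1) :
    IsSelfAdjoint (rankOneAf A f) ↔ ∃ μ : ℂ, A f = μ • f := by
  have hff : (inner ℂ f f : ℂ) ≠ 0 := by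
    intro h
    rw [inner_self_eq_zero] at h
    rw [h] at hf
    simp at hf
  rw [ContinuousLinearMap.isSelfAdjoint_iff_isSymmetric]
  constructor
  · intro hS
    refine ⟨(inner ℂ f f : ℂ)⁻¹, ?_⟩
    apply ext_inner_right ℂ
    intro y
    have h := hS f y
    simp only [rankOneAf, ContinuousLinearMap.smulRight_apply, innerSL_apply_apply,
      inner_smul_left, inner_smul_right, ContinuousLinearMap.coe_coe] at h
    have hc : (starRingEnd ℂ) (inner ℂ (A f) f : ℂ) = 1 := by
      rw [← inner_conj_symm, hf]; simp
    rw [hc, one_mul] at h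
    rw [inner_smul_left, map_inv₀, inner_self_conj]
    field_simp
    linear_combination -h
  · rintro ⟨μ, hμ⟩ x y
    have hμr : (starRingEnd ℂ) μ = μ := by
      have h1 : μ * (inner ℂ f f : ℂ) = 1 := by
        rw [hμ, inner_smul_right] at hf; linear_combination hf
      have h2 : (starRingEnd ℂ) μ * (inner ℂ f f : ℂ) = 1 := by
        have := congrArg (starRingEnd ℂ) h1
        rwa [map_mul, inner_self_conj, map_one] at this
      exact (mul_right_cancel₀ hff (h2.trans h1.symm))
    simp only [rankOneAf, hμ, ContinuousLinearMap.coe_coe, ContinuousLinearMap.smulRight_apply,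
      innerSL_apply_apply, inner_smul_left, inner_smul_right]
    rw [map_mul, inner_conj_symm, Complex.conj_conj, hμr]
    ring
end

section
/- Let A be a positive injective bounded operator on a Hilbert space E with [Af,g] = ⟨f,g⟩ defining a second inner product, and let H be the completion of E under ⟨·,·⟩. Then A^{1/2}, viewed as a map from H to E, is a surjective isometry: for every f ∈ H, A^{1/2}f ∈ E with |A^{1/2}f|_E = ‖f‖_H, and A^{1/2}(H) = E. -/
open ContinuousLinearMap

section Aux

local notation "⟪" x ", " y "⟫" => @inner ℂ _ _ x y

/-- A continuous linear map whose range's orthogonal complement is trivial has dense range. -/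
lemma aux_denseRange_of_orth {E F : Type*} [NormedAddCommGroup E] [InnerProductSpace ℂ E]
    [CompleteSpace E] [NormedAddCommGroup F] [InnerProductSpace ℂ F]
    (T : F →L[ℂ] E) (h : ∀ x : E, (∀ y : F, ⟪T y, x⟫ = 0) → x = 0) : DenseRange T := by
  have htop : (LinearMap.range (T : F →ₗ[ℂ] E)).topologicalClosure = ⊤ := by
    rw [Submodule.topologicalClosure_eq_top_iff, Submodule.eq_bot_iff]
    intro x hx
    rw [Submodule.mem_orthogonal] at hx
    exact h x fun y => hx (T y) ⟨y, rfl⟩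
  have hdense : Dense ((LinearMap.range (T : F →ₗ[ℂ] E) : Submodule ℂ E) : Set E) :=
    Submodule.dense_iff_topologicalClosure_eq_top.mpr htop
  have : ((LinearMap.range (T : F →ₗ[ℂ] E) : Submodule ℂ E) : Set E) = Set.range T := by
    ext x; simp [LinearMap.mem_range]
  rwa [this] at hdense

/-- If a vector is orthogonal to a dense range, it is zero. -/
lemma aux_eq_zero_of_orth_dense {E F : Type*} [NormedAddCommGroup E] [InnerProductSpace ℂ E]
    [NormedAddCommGroup F] [InnerProductSpace ℂ F]
    (g : F → E) (hd : DenseRange g) (x : E) (h : ∀ y : F, ⟪g y, x⟫ = 0) : x = 0 := by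
  have hfun : (fun v : E => ⟪v, x⟫) = fun _ : E => (0 : ℂ) := by
    refine Continuous.ext_on hd ?_ ?_ ?_
    · exact continuous_id.inner continuous_const
    · exact continuous_const
    · rintro v ⟨y, rfl⟩
      exact h y
  have : ⟪x, x⟫ = 0 := congrFun hfun x
  exact inner_self_eq_zero.mp this

end Aux

/-- let `A` be a positive injective operator on the Hilbert space `E`,
`⟨f,g⟩ = [A f, g]` the associated second inner product, and `ι : E → H` the completion of
`E` for `⟨·,·⟩` (a dense embedding with `⟨ι f, ι g⟩_H = [f, A g]`). If `Ā` is the bounded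
positive extension of `A` to `H` and `S = Ā^{1/2}` its positive square root, then
`S : H → E` is a surjective isometry: `S(H) = ι(E)`, with `|S h|_E = ‖h‖_H`. -/
theorem sqrt_solution_operator_isometry_onto
    {E H : Type*} [NormedAddCommGroup E] [InnerProductSpace ℂ E] [CompleteSpace E]
    [NormedAddCommGroup H] [InnerProductSpace ℂ H] [CompleteSpace H]
    (A : E →L[ℂ] E) (hA : A.IsPositive) (hAinj : Function.Injective A)
    (ι : E →L[ℂ] H) (hdense : DenseRange ι)
    (hinner : ∀ f g : E, (inner ℂ (ι f) (ι g) : ℂ) = inner ℂ f (A g))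
    (Abar : H →L[ℂ] H) (hAbar : Abar.IsPositive)
    (hext : ∀ f : E, Abar (ι f) = ι (A f))
    (S : H →L[ℂ] H) (hS : S.IsPositive) (hS2 : S.comp S = Abar) :
    (∀ h : H, ∃ e : E, ι e = S h ∧ ‖e‖ = ‖h‖) ∧
    (∀ e : E, ∃ h : H, S h = ι e) := by
  have hsaA : ContinuousLinearMap.adjoint A = A := hA.isSelfAdjoint.adjoint_eq
  have hsaS : ContinuousLinearMap.adjoint S = S := hS.isSelfAdjoint.adjoint_eq
  have hsaAbar : ContinuousLinearMap.adjoint Abar = Abar := hAbar.isSelfAdjoint.adjoint_eq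
  set J := ContinuousLinearMap.adjoint ι with hJdef
  -- symmetry of `A`, `S`, `Abar`
  have symmA : ∀ u v : E, (inner ℂ (A u) v : ℂ) = inner ℂ u (A v) := fun u v => by
    conv_lhs => rw [← hsaA]
    exact ContinuousLinearMap.adjoint_inner_left A v u
  have symmS : ∀ u v : H, (inner ℂ (S u) v : ℂ) = inner ℂ u (S v) := fun u v => by
    conv_lhs => rw [← hsaS]
    exact ContinuousLinearMap.adjoint_inner_left S v u
  have symmAbar : ∀ u v : H, (inner ℂ (Abar u) v : ℂ) = inner ℂ u (Abar v) := fun u v => by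
    conv_lhs => rw [← hsaAbar]
    exact ContinuousLinearMap.adjoint_inner_left Abar v u
  -- `J ∘ ι = A`
  have hJι : ∀ f : E, J (ι f) = A f := by
    intro f
    apply ext_inner_right ℂ
    intro v
    rw [ContinuousLinearMap.adjoint_inner_left, hinner, ← symmA]
  -- `ι ∘ J = Abar`
  have hιJ : ∀ h : H, ι (J h) = Abar h := by
    have : (fun h : H => ι (J h)) = fun h : H => Abar h := by
      refine hdense.equalizer (ι.continuous.comp J.continuous) Abar.continuous (funext fun f => ?_)
      show ι (J (ι f)) = Abar (ι f)
      rw [hJι, hext]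
    exact fun h => congrFun this h
  -- the key norm identity `‖J h‖ = ‖S h‖`
  have hnorm : ∀ h : H, ‖J h‖ = ‖S h‖ := by
    intro h
    have key : (inner ℂ (J h) (J h) : ℂ) = inner ℂ (S h) (S h) := by
      calc (inner ℂ (J h) (J h) : ℂ) = inner ℂ h (ι (J h)) :=
            ContinuousLinearMap.adjoint_inner_left ι (J h) h
        _ = inner ℂ h (Abar h) := by rw [hιJ]
        _ = inner ℂ h (S (S h)) := by rw [← hS2]; rfl
        _ = inner ℂ (S h) (S h) := (symmS h (S h)).symm
    rw [inner_self_eq_norm_sq_to_K, inner_self_eq_norm_sq_to_K] at key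
    have key' : ‖J h‖ ^ 2 = ‖S h‖ ^ 2 := by exact_mod_cast key
    rw [← Real.sqrt_sq (norm_nonneg (J h)), key', Real.sqrt_sq (norm_nonneg (S h))]
  -- `ι` is injective
  have hιinj : ∀ f : E, ι f = 0 → f = 0 := by
    intro f hf
    have hAf : A f = 0 := by rw [← hJι, hf, map_zero]
    exact hAinj (by rw [hAf, map_zero])
  -- `A` has dense range
  have hdA : DenseRange A := by
    refine aux_denseRange_of_orth A fun x hx => ?_
    have hAx : A x = 0 := by
      apply ext_inner_left ℂ
      intro v
      rw [inner_zero_right, ← symmA, hx]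
    exact hAinj (by rw [hAx, map_zero])
  -- `Abar` is injective
  have hAbarinj : ∀ h : H, Abar h = 0 → h = 0 := by
    intro h hh
    have hd2 : DenseRange (⇑ι ∘ ⇑A) := hdense.comp hdA ι.continuous
    refine aux_eq_zero_of_orth_dense (⇑ι ∘ ⇑A) hd2 h fun f => ?_
    show (inner ℂ (ι (A f)) h : ℂ) = 0
    rw [← hext, symmAbar, hh, inner_zero_right]
  -- `S` is injective
  have hSinj : ∀ h : H, S h = 0 → h = 0 := by
    intro h hh
    refine hAbarinj h ?_
    rw [← hS2]
    show S (S h) = 0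
    rw [hh, map_zero]
  -- `S` has dense range
  have hdS : DenseRange S := by
    refine aux_denseRange_of_orth S fun x hx => ?_
    refine hSinj x ?_
    apply ext_inner_left ℂ
    intro v
    rw [inner_zero_right, ← symmS, hx]
  -- `J` has dense range
  have hdJ : DenseRange J := by
    refine aux_denseRange_of_orth J fun x hx => ?_
    refine hιinj x ?_
    apply ext_inner_left ℂ
    intro v
    rw [inner_zero_right, ← ContinuousLinearMap.adjoint_inner_left ι]
    exact hx v
  constructor
  · -- part 1: every `S h` lies in `ι (E)` with matching norm
    intro h
    have hmem : h ∈ closure (Set.range S) := hdS h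
    rw [mem_closure_iff_seq_limit] at hmem
    obtain ⟨y, hy_mem, hy_lim⟩ := hmem
    choose u hu using hy_mem
    set e : ℕ → E := fun n => J (u n) with he_def
    have hdist : ∀ m n : ℕ, dist (e m) (e n) = dist (y m) (y n) := by
      intro m n
      rw [dist_eq_norm, dist_eq_norm, ← hu m, ← hu n, show e m - e n = J (u m - u n) by
        simp [he_def, map_sub], hnorm, map_sub]
    have hCauchy : CauchySeq e := by
      have hyC : CauchySeq y := hy_lim.cauchySeq
      rw [Metric.cauchySeq_iff] at hyC ⊢
      intro ε hε
      obtain ⟨N, hN⟩ := hyC ε hε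
      exact ⟨N, fun m hm n hn => by rw [hdist]; exact hN m hm n hn⟩
    obtain ⟨elim, helim⟩ := cauchySeq_tendsto_of_complete hCauchy
    refine ⟨elim, ?_, ?_⟩
    · have h1 : Filter.Tendsto (fun n => ι (e n)) Filter.atTop (nhds (ι elim)) :=
        (ι.continuous.tendsto _).comp helim
      have h2 : ∀ n, ι (e n) = S (y n) := by
        intro n
        show ι (J (u n)) = S (y n)
        rw [hιJ, ← hS2, ← hu n]
        rfl
      have h3 : Filter.Tendsto (fun n => S (y n)) Filter.atTop (nhds (S h)) :=
        (S.continuous.tendsto _).comp hy_lim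
      simp_rw [h2] at h1
      exact tendsto_nhds_unique h1 h3
    · have h4 : Filter.Tendsto (fun n => ‖e n‖) Filter.atTop (nhds ‖elim‖) := helim.norm
      have h5 : ∀ n, ‖e n‖ = ‖y n‖ := by
        intro n
        show ‖J (u n)‖ = ‖y n‖
        rw [hnorm, hu]
      have h6 : Filter.Tendsto (fun n => ‖y n‖) Filter.atTop (nhds ‖h‖) := hy_lim.norm
      simp_rw [h5] at h4
      exact tendsto_nhds_unique h4 h6
  · -- part 2: surjectivity onto `ι (E)`
    intro e
    have hmem : e ∈ closure (Set.range J) := hdJ e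
    rw [mem_closure_iff_seq_limit] at hmem
    obtain ⟨z, hz_mem, hz_lim⟩ := hmem
    choose u hu using hz_mem
    set y : ℕ → H := fun n => S (u n) with hy_def
    have hdist : ∀ m n : ℕ, dist (y m) (y n) = dist (z m) (z n) := by
      intro m n
      rw [dist_eq_norm, dist_eq_norm, ← hu m, ← hu n, show y m - y n = S (u m - u n) by
        simp [hy_def, map_sub], ← hnorm, map_sub]
    have hCauchy : CauchySeq y := by
      have hzC : CauchySeq z := hz_lim.cauchySeq
      rw [Metric.cauchySeq_iff] at hzC ⊢
      intro ε hε
      obtain ⟨N, hN⟩ := hzC ε hε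
      exact ⟨N, fun m hm n hn => by rw [hdist]; exact hN m hm n hn⟩
    obtain ⟨g, hg⟩ := cauchySeq_tendsto_of_complete hCauchy
    refine ⟨g, ?_⟩
    have h1 : Filter.Tendsto (fun n => S (y n)) Filter.atTop (nhds (S g)) :=
      (S.continuous.tendsto _).comp hg
    have h2 : ∀ n, S (y n) = ι (z n) := by
      intro n
      show S (S (u n)) = ι (z n)
      rw [← hu n, hιJ, ← hS2]
      rfl
    have h3 : Filter.Tendsto (fun n => ι (z n)) Filter.atTop (nhds (ι e)) :=
      (ι.continuous.tendsto _).comp hz_lim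
    simp_rw [h2] at h1
    exact tendsto_nhds_unique h1 h3
end

section
/- Let G ∈ GL(E) satisfy G*AG = A where A is positive and injective. Then there exists a unique unitary operator U_G on E such that U_G A^{1/2} = A^{1/2} G, where A^{1/2} is the positive square root of A in B(E). Moreover, the map G ↦ U_G is a group homomorphism: U_{G₁G₂} = U_{G₁}U_{G₂}. -/
open ContinuousLinearMap
open scoped InnerProductSpace

section Aux
variable {E : Type*} [NormedAddCommGroup E] [InnerProductSpace ℂ E] [CompleteSpace E]

lemma aux_dense_range (S : E →L[ℂ] E) (hS : S.IsPositive) (hSinj : Function.Injective S) :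
    Dense (Set.range S) := by
  have hsa : IsSelfAdjoint S := hS.isSelfAdjoint
  have htop : (LinearMap.range (S : E →ₗ[ℂ] E)).topologicalClosure = ⊤ := by
    rw [Submodule.topologicalClosure_eq_top_iff, Submodule.eq_bot_iff]
    intro y hy
    have h0 : S y = 0 := by
      refine ext_inner_right ℂ fun x => ?_
      have h1 := adjoint_inner_left S x y
      rw [hsa.adjoint_eq] at h1
      rw [h1, inner_zero_left, ← inner_conj_symm, hy (S x) (LinearMap.mem_range_self _ x),
        map_zero]
    exact hSinj (by rw [h0, map_zero])
  have hc := congrArg (fun K : Submodule ℂ E => (K : Set E)) htop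
  simp only [Submodule.topologicalClosure_coe, Submodule.top_coe] at hc
  rw [dense_iff_closure_eq]
  simpa [LinearMap.coe_range] using hc

lemma aux_ext_dense (S : E →L[ℂ] E) (hdense : Dense (Set.range S))
    (f g : E →L[ℂ] E) (h : ∀ x, f (S x) = g (S x)) : f = g := by
  ext x
  exact congrFun (Continuous.ext_on hdense f.continuous g.continuous
    (by rintro _ ⟨x, rfl⟩; exact h x)) x

lemma aux_norm (A S : E →L[ℂ] E) (hS : S.IsPositive) (hS2 : S.comp S = A)
    (G : (E →L[ℂ] E)ˣ)
    (hG : (adjoint (G : E →L[ℂ] E)).comp (A.comp (G : E →L[ℂ] E)) = A) (x : E) :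
    ‖S ((G : E →L[ℂ] E) x)‖ = ‖S x‖ := by
  have hsa : IsSelfAdjoint S := hS.isSelfAdjoint
  set g : E →L[ℂ] E := (G : E →L[ℂ] E) with hg
  have key : ∀ u : E, (⟪S u, S u⟫_ℂ) = ⟪A u, u⟫_ℂ := by
    intro u
    have h1 := adjoint_inner_left S u (S u)
    rw [hsa.adjoint_eq] at h1
    rw [← h1, ← hS2, comp_apply]
  have h1 : (⟪S (g x), S (g x)⟫_ℂ) = ⟪S x, S x⟫_ℂ := by
    calc (⟪S (g x), S (g x)⟫_ℂ) = ⟪A (g x), g x⟫_ℂ := key _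
      _ = ⟪adjoint g (A (g x)), x⟫_ℂ := (adjoint_inner_left g x (A (g x))).symm
      _ = ⟪A x, x⟫_ℂ := by
          rw [show adjoint g (A (g x)) = ((adjoint g).comp (A.comp g)) x from rfl, hG]
      _ = ⟪S x, S x⟫_ℂ := (key x).symm
  rw [inner_self_eq_norm_sq_to_K, inner_self_eq_norm_sq_to_K] at h1
  have h3 : ‖S (g x)‖ ^ 2 = ‖S x‖ ^ 2 := by exact_mod_cast h1
  nlinarith [norm_nonneg (S (g x)), norm_nonneg (S x)]

end Aux

section Main
variable {E : Type*} [NormedAddCommGroup E] [InnerProductSpace ℂ E] [CompleteSpace E]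

lemma aux_exists_unitary (S : E →L[ℂ] E) (hSinj : Function.Injective S)
    (hdense : Dense (Set.range S)) (T : E →L[ℂ] E)
    (hnorm : ∀ x, ‖T x‖ = ‖S x‖) (hTdense : Dense (Set.range T)) :
    ∃ U : E →L[ℂ] E, U ∈ unitary (E →L[ℂ] E) ∧ ∀ x, U (S x) = T x := by
  set M : Submodule ℂ E := LinearMap.range (S : E →ₗ[ℂ] E) with hM
  have hMdense : Dense (M : Set E) := by
    rwa [hM, LinearMap.coe_range]
  set e : E ≃ₗ[ℂ] M := LinearEquiv.ofInjective (S : E →ₗ[ℂ] E) hSinj with he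
  have hecoe : ∀ x : E, ((e x : E)) = S x := fun x => rfl
  have hsymm : ∀ m : M, S (e.symm m) = (m : E) := by
    intro m
    have := hecoe (e.symm m)
    rw [e.apply_symm_apply] at this
    exact this.symm
  set φ : M →ₗ[ℂ] E := (T : E →ₗ[ℂ] E).comp e.symm.toLinearMap with hφ
  have hφiso : ∀ m : M, ‖φ m‖ = ‖m‖ := by
    intro m
    have h1 : φ m = T (e.symm m) := rfl
    rw [h1, hnorm, hsymm]; rfl
  set fI : M →ₗᵢ[ℂ] E := ⟨φ, hφiso⟩ with hfI
  have hui : IsUniformInducing ((↑) : M → E) := isometry_subtype_coe.isUniformInducing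
  have hdr : DenseRange (M.subtypeL) := by
    rw [DenseRange]
    simpa [Subtype.range_val] using hMdense
  set U : E →L[ℂ] E := fI.toContinuousLinearMap.extend M.subtypeL with hU
  have hUeq : ∀ x : E, U (S x) = T x := by
    intro x
    have h1 : M.subtypeL (e x) = S x := hecoe x
    rw [← h1, hU]
    rw [ContinuousLinearMap.extend_eq _ hdr hui]
    show φ (e x) = T x
    rw [hφ]
    simp
  have hUiso : ∀ y : E, ‖U y‖ = ‖y‖ := by
    have := Continuous.ext_on hdense (by continuity : Continuous fun y : E => ‖U y‖)
      (by continuity : Continuous fun y : E => ‖y‖)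
      (by rintro _ ⟨x, rfl⟩; show ‖U (S x)‖ = ‖S x‖; rw [hUeq, hnorm])
    exact fun y => congrFun this y
  have hadj : adjoint U ∘L U = 1 := (norm_map_iff_adjoint_comp_self U).mp hUiso
  have hUsurj : Function.Surjective U := by
    have hiso : Isometry U := AddMonoidHomClass.isometry_of_norm U hUiso
    have hclosed : IsClosed (Set.range U) := hiso.isClosedEmbedding.isClosed_range
    have hsub : Set.range T ⊆ Set.range U := by
      rintro _ ⟨x, rfl⟩; exact ⟨S x, hUeq x⟩
    have : Dense (Set.range U) := hTdense.mono hsub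
    have hr : Set.range U = Set.univ := by
      rw [← hclosed.closure_eq, this.closure_eq]
    intro z
    exact Set.range_eq_univ.mp hr z
  have hmem : U ∈ unitary (E →L[ℂ] E) := by
    rw [Unitary.mem_iff]
    constructor
    · rw [star_eq_adjoint]; exact hadj
    · rw [star_eq_adjoint]
      ext z
      obtain ⟨x, rfl⟩ := hUsurj z
      have : adjoint U (U x) = x := by
        have := ContinuousLinearMap.ext_iff.mp hadj x
        simpa using this
      show U (adjoint U (U x)) = U x
      rw [this]
  exact ⟨U, hmem, hUeq⟩

end Main




open ContinuousLinearMap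

/-- for `G ∈ GL(E)` with `G* A G = A` (`A` positive injective, `S = A^{1/2}`
its positive square root), there is a unique unitary `U_G` with `U_G A^{1/2} = A^{1/2} G`;
moreover `G ↦ U_G` is a group homomorphism: `U_{G₁G₂} = U_{G₁} U_{G₂}`. -/
theorem exists_unique_unitary_intertwiner_and_multiplicative
    {E : Type*} [NormedAddCommGroup E] [InnerProductSpace ℂ E] [CompleteSpace E]
    (A : E →L[ℂ] E) (hA : A.IsPositive) (hAinj : Function.Injective A)
    (S : E →L[ℂ] E) (hS : S.IsPositive) (hS2 : S.comp S = A) :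
    (∀ G : (E →L[ℂ] E)ˣ,
      (adjoint (G : E →L[ℂ] E)).comp (A.comp (G : E →L[ℂ] E)) = A →
      ∃! U : E →L[ℂ] E, U ∈ unitary (E →L[ℂ] E) ∧
        U.comp S = S.comp (G : E →L[ℂ] E)) ∧
    (∀ G₁ G₂ : (E →L[ℂ] E)ˣ,
      (adjoint (G₁ : E →L[ℂ] E)).comp (A.comp (G₁ : E →L[ℂ] E)) = A →
      (adjoint (G₂ : E →L[ℂ] E)).comp (A.comp (G₂ : E →L[ℂ] E)) = A →
      ∀ U₁ U₂ U₁₂ : E →L[ℂ] E,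
        U₁ ∈ unitary (E →L[ℂ] E) → U₁.comp S = S.comp (G₁ : E →L[ℂ] E) →
        U₂ ∈ unitary (E →L[ℂ] E) → U₂.comp S = S.comp (G₂ : E →L[ℂ] E) →
        U₁₂ ∈ unitary (E →L[ℂ] E) → U₁₂.comp S = S.comp ((G₁ * G₂ : (E →L[ℂ] E)ˣ) : E →L[ℂ] E) →
        U₁₂ = U₁.comp U₂) := by
  have hSinj : Function.Injective S := by
    intro a b hab
    apply hAinj
    rw [← hS2]
    show S (S a) = S (S b)
    rw [hab]
  have hdense : Dense (Set.range S) := aux_dense_range S hS hSinj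
  constructor
  · intro G hG
    set T : E →L[ℂ] E := S.comp (G : E →L[ℂ] E) with hT
    have hnorm : ∀ x, ‖T x‖ = ‖S x‖ := fun x => aux_norm A S hS hS2 G hG x
    have hGsurj : Function.Surjective ⇑(G : E →L[ℂ] E) := fun y =>
      ⟨(↑G⁻¹ : E →L[ℂ] E) y, by
        show ((↑G : E →L[ℂ] E) * (↑G⁻¹ : E →L[ℂ] E)) y = y
        rw [Units.mul_inv]; rfl⟩
    have hTdense : Dense (Set.range T) := by
      have hco : ⇑T = ⇑S ∘ ⇑(G : E →L[ℂ] E) := rfl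
      rw [hco, Set.range_comp, hGsurj.range_eq, Set.image_univ]
      exact hdense
    obtain ⟨U, hmem, hUeq⟩ := aux_exists_unitary S hSinj hdense T hnorm hTdense
    refine ⟨U, ⟨hmem, ?_⟩, ?_⟩
    · ext x; exact hUeq x
    · rintro V ⟨hVmem, hVeq⟩
      refine aux_ext_dense S hdense V U fun x => ?_
      have h1 : V (S x) = T x := ContinuousLinearMap.ext_iff.mp hVeq x
      rw [h1, ← hUeq]
  · intro G₁ G₂ hG₁ hG₂ U₁ U₂ U₁₂ h₁m h₁e h₂m h₂e h₁₂m h₁₂e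
    refine aux_ext_dense S hdense U₁₂ (U₁.comp U₂) fun x => ?_
    have e12 : U₁₂ (S x) = S ((G₁ : E →L[ℂ] E) ((G₂ : E →L[ℂ] E) x)) := by
      have := ContinuousLinearMap.ext_iff.mp h₁₂e x
      rw [comp_apply] at this
      rw [this, Units.val_mul]
      rfl
    have e2 : U₂ (S x) = S ((G₂ : E →L[ℂ] E) x) := ContinuousLinearMap.ext_iff.mp h₂e x
    have e1 : U₁ (S ((G₂ : E →L[ℂ] E) x)) = S ((G₁ : E →L[ℂ] E) ((G₂ : E →L[ℂ] E) x)) :=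
      ContinuousLinearMap.ext_iff.mp h₁e ((G₂ : E →L[ℂ] E) x)
    rw [e12, comp_apply, e2, e1]
end

section
/- Conversely, if U is a unitary operator on E with U(R(A^{1/2})) = R(A^{1/2}) (where R denotes range), then there exists G ∈ GL(E) with G*AG = A and U A^{1/2} = A^{1/2} G. -/
open ContinuousLinearMap Filter Topology
open scoped InnerProductSpace

/-- conversely, if `U` is a unitary operator on `E` preserving the range of
`S = A^{1/2}` (`A` positive injective), then there is `G ∈ GL(E)` with `G* A G = A` and
`U A^{1/2} = A^{1/2} G`. -/
theorem unitary_preserving_range_sqrt_comes_from_isometry_group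
    {E : Type*} [NormedAddCommGroup E] [InnerProductSpace ℂ E] [CompleteSpace E]
    (A : E →L[ℂ] E) (hA : A.IsPositive) (hAinj : Function.Injective A)
    (S : E →L[ℂ] E) (hS : S.IsPositive) (hS2 : S.comp S = A)
    (U : E →L[ℂ] E) (hU : U ∈ unitary (E →L[ℂ] E))
    (hrange : U '' Set.range S = Set.range S) :
    ∃ G : (E →L[ℂ] E)ˣ,
      (adjoint (G : E →L[ℂ] E)).comp (A.comp (G : E →L[ℂ] E)) = A ∧
      U.comp S = S.comp (G : E →L[ℂ] E) := by
  classical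
  have hAS : ∀ x, A x = S (S x) := fun x => by rw [← hS2]; rfl
  have hSinj : Function.Injective S := by
    intro x y h
    apply hAinj
    rw [hAS, hAS, h]
  have hSsa : IsSelfAdjoint S := hS.isSelfAdjoint
  -- unitary: adjoint U ∘ U = id
  have hUadj : ∀ x, adjoint U (U x) = x := by
    intro x
    have h1 : star U * U = 1 := hU.1
    have : (star U * U) x = x := by rw [h1]; rfl
    simpa [ContinuousLinearMap.star_eq_adjoint, ContinuousLinearMap.mul_apply] using this
  have hUinner : ∀ x y : E, ⟪U x, U y⟫_ℂ = ⟪x, y⟫_ℂ := by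
    intro x y
    calc ⟪U x, U y⟫_ℂ = ⟪x, adjoint U (U y)⟫_ℂ := (ContinuousLinearMap.adjoint_inner_right U x (U y)).symm
    _ = ⟪x, y⟫_ℂ := by rw [hUadj]
  have hUinj : Function.Injective U := by
    intro x y h
    have := hUadj x
    rw [h, hUadj] at this
    exact this.symm
  -- existence of preimages under S
  have hmem : ∀ f : E, ∃ g : E, S g = U (S f) := by
    intro f
    have : U (S f) ∈ Set.range S := by
      rw [← hrange]; exact ⟨S f, ⟨f, rfl⟩, rfl⟩
    obtain ⟨g, hg⟩ := this
    exact ⟨g, hg⟩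
  let Gf : E → E := fun f => (hmem f).choose
  have key : ∀ f, S (Gf f) = U (S f) := fun f => (hmem f).choose_spec
  let Glin : E →ₗ[ℂ] E :=
    { toFun := Gf
      map_add' := by
        intro x y
        apply hSinj
        rw [key, map_add, map_add, map_add, key, key]
      map_smul' := by
        intro c x
        apply hSinj
        rw [key, map_smul, map_smul, map_smul, key]
        rfl }
  have hGfeq : ∀ f, Glin f = Gf f := fun _ => rfl
  -- continuity via closed graph theorem
  have hcont : Continuous Glin := by
    apply Glin.continuous_of_seq_closed_graph
    intro u x y hux huy
    apply hSinj
    have h1 : Tendsto (fun n => S (Glin (u n))) atTop (𝓝 (S y)) :=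
      (S.continuous.tendsto y).comp huy
    have h2 : Tendsto (fun n => S (Glin (u n))) atTop (𝓝 (U (S x))) := by
      have : (fun n => S (Glin (u n))) = fun n => U (S (u n)) := by
        funext n; exact key (u n)
      rw [this]
      exact ((U.continuous.tendsto _).comp ((S.continuous.tendsto x).comp hux))
    have := tendsto_nhds_unique h1 h2
    rw [this]
    exact (key x).symm
  let Gc : E →L[ℂ] E := ⟨Glin, hcont⟩
  have hGc : ∀ f, S (Gc f) = U (S f) := key
  -- injectivity of Gc
  have hGinj : LinearMap.ker (Gc : E →ₗ[ℂ] E) = ⊥ := by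
    rw [LinearMap.ker_eq_bot]
    intro x y h
    apply hSinj; apply hUinj
    rw [← hGc, ← hGc]
    exact congrArg S h
  -- surjectivity
  have hGsurj : LinearMap.range (Gc : E →ₗ[ℂ] E) = ⊤ := by
    rw [LinearMap.range_eq_top]
    intro f
    have : S f ∈ U '' Set.range S := by rw [hrange]; exact ⟨f, rfl⟩
    obtain ⟨_, ⟨h, rfl⟩, hh⟩ := this
    refine ⟨h, hSinj ?_⟩
    rw [ContinuousLinearMap.coe_coe, hGc, hh]
  let e : E ≃L[ℂ] E := ContinuousLinearEquiv.ofBijective Gc hGinj hGsurj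
  have he : (e : E →L[ℂ] E) = Gc := ContinuousLinearEquiv.coe_ofBijective _ _ _
  refine ⟨e.toUnit, ?_, ?_⟩
  · -- adjoint G ∘ A ∘ G = A
    have hval : ((e.toUnit : (E →L[ℂ] E)ˣ) : E →L[ℂ] E) = Gc := he
    rw [hval]
    ext f
    apply ext_inner_right ℂ
    intro v
    simp only [ContinuousLinearMap.comp_apply]
    rw [ContinuousLinearMap.adjoint_inner_left]
    calc ⟪A (Gc f), Gc v⟫_ℂ = ⟪S (S (Gc f)), Gc v⟫_ℂ := by rw [hAS]
    _ = ⟪S (Gc f), S (Gc v)⟫_ℂ := by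
        rw [← ContinuousLinearMap.adjoint_inner_left S]
        rw [hSsa.adjoint_eq]
    _ = ⟪U (S f), U (S v)⟫_ℂ := by rw [hGc, hGc]
    _ = ⟪S f, S v⟫_ℂ := hUinner _ _
    _ = ⟪S (S f), v⟫_ℂ := by
        rw [← ContinuousLinearMap.adjoint_inner_left S, hSsa.adjoint_eq]
    _ = ⟪A f, v⟫_ℂ := by rw [hAS]
  · have hval : ((e.toUnit : (E →L[ℂ] E)ˣ) : E →L[ℂ] E) = Gc := he
    rw [hval]
    ext f
    simp only [ContinuousLinearMap.comp_apply]
    exact (hGc f).symm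
end

section
/- On the torus 𝕋, the multiplication operator M_z by the identity function z is not in the range of the exponential map of Γ: there is no bounded operator X on H¹(𝕋) which is L²-antihermitian (⟨Xf,g⟩ = −⟨f,Xg⟩) with e^X = M_z. Key step: if e^X = M_z with X bounded and commuting with M_z, then X = M_g for g = X(1), and then z = e^{g} with g continuous on 𝕋, contradicting that z has winding number 1. -/
open MeasureTheory
open scoped ENNReal NNReal

/-- The weight measure `∑_n (1+n²) δ_n` on `ℤ`, so that `L²` of this measure is the
Sobolev space `H¹(𝕋)` in the Fourier coordinates: `H¹(𝕋) ≅ {a : ℤ → ℂ | ∑ (1+n²)|aₙ|² < ∞}`. -/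
noncomputable def sobolevWeight : Measure ℤ :=
  (Measure.count : Measure ℤ).withDensity fun n => 1 + (n.natAbs : ENNReal) ^ 2

/-- `H¹(𝕋)` realized via Fourier coefficients as a weighted `ℓ²(ℤ)` space. -/
noncomputable abbrev H1Torus := Lp ℂ 2 sobolevWeight

namespace MzAux

noncomputable def w (n : ℤ) : ℝ≥0∞ := 1 + (n.natAbs : ℝ≥0∞) ^ 2
lemma w_ne_top (n : ℤ) : w n ≠ ⊤ := by simp [w]
lemma one_le_w (n : ℤ) : 1 ≤ w n := le_self_add
lemma w_ne_zero (n : ℤ) : w n ≠ 0 := fun h => by simpa [h] using one_le_w n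
lemma sobolev_lintegral (g : ℤ → ℝ≥0∞) :
    ∫⁻ n, g n ∂sobolevWeight = ∑' n, w n * g n := by
  rw [sobolevWeight,
    lintegral_withDensity_eq_lintegral_mul _ (measurable_of_countable _) (measurable_of_countable _),
    lintegral_count]
  rfl

noncomputable def S : ℝ≥0∞ := ∑' n : ℤ, (w n)⁻¹

lemma w_eq_coe (n : ℤ) : w n = ((1 + (n.natAbs : ℝ≥0) ^ 2 : ℝ≥0) : ℝ≥0∞) := by
  push_cast [w]; rfl

lemma S_ne_top : S ≠ ⊤ := by
  have h1 : Summable (fun n : ℤ => ((1 + (n.natAbs : ℝ≥0) ^ 2)⁻¹ : ℝ≥0)) := by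
    rw [← NNReal.summable_coe]
    have hs : Summable (fun n : ℤ => 1 / ((n : ℝ)) ^ 2) :=
      Real.summable_one_div_int_pow.mpr one_lt_two
    apply Summable.of_norm_bounded_eventually hs
    apply Filter.mem_of_superset ((Set.finite_singleton (0:ℤ)).compl_mem_cofinite)
    intro n hn
    simp only [Set.mem_compl_iff, Set.mem_singleton_iff] at hn
    have h2 : ((n.natAbs : ℝ)) ^ 2 = (n : ℝ) ^ 2 := by
      rw [Nat.cast_natAbs, Int.cast_abs, sq_abs]
    have hpos : (0:ℝ) < (n : ℝ) ^ 2 := by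
      have : (n:ℝ) ≠ 0 := Int.cast_ne_zero.mpr hn
      positivity
    simp only [Set.mem_setOf_eq, Real.norm_eq_abs, NNReal.coe_inv]
    rw [abs_of_nonneg (by positivity), one_div]
    apply inv_anti₀ hpos
    push_cast
    rw [h2]; linarith
  have : S = ∑' n : ℤ, (((1 + (n.natAbs : ℝ≥0) ^ 2)⁻¹ : ℝ≥0) : ℝ≥0∞) := by
    unfold S
    congr 1; funext n
    rw [w_eq_coe, ← ENNReal.coe_inv]
    positivity
  rw [this]
  exact ENNReal.tsum_coe_ne_top_iff_summable.mpr h1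

lemma sq_tsum (f : ℤ → ℂ) : eLpNorm f 2 sobolevWeight
    = (∑' n, w n * (‖f n‖₊ : ℝ≥0∞) ^ (2:ℝ)) ^ (1/2 : ℝ) := by
  rw [eLpNorm_eq_lintegral_rpow_enorm_toReal two_ne_zero ENNReal.ofNat_ne_top, sobolev_lintegral]
  norm_num
  rfl

lemma tsum_nnnorm_le (a : H1Torus) :
    ∑' n, (‖(a : ℤ → ℂ) n‖₊ : ℝ≥0∞) ≤ S ^ (1/2:ℝ) * eLpNorm (a : ℤ → ℂ) 2 sobolevWeight := by
  set f : ℤ → ℝ≥0∞ := fun n => (w n) ^ (-(1/2) : ℝ) with hf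
  set g : ℤ → ℝ≥0∞ := fun n => (w n) ^ ((1/2) : ℝ) * (‖(a : ℤ → ℂ) n‖₊ : ℝ≥0∞) with hg
  have hfg : ∀ n, (‖(a : ℤ → ℂ) n‖₊ : ℝ≥0∞) = f n * g n := by
    intro n
    rw [hf, hg]
    dsimp only
    rw [← mul_assoc, ← ENNReal.rpow_add _ _ (w_ne_zero n) (w_ne_top n)]
    norm_num
  have hconj : (2:ℝ).HolderConjugate 2 := Real.HolderConjugate.two_two
  have H := ENNReal.lintegral_mul_le_Lp_mul_Lq (Measure.count : Measure ℤ) hconj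
    (measurable_of_countable f).aemeasurable (measurable_of_countable g).aemeasurable
  rw [lintegral_count, lintegral_count, lintegral_count] at H
  have hL : ∑' n, (f n ^ (2:ℝ)) = S := by
    unfold S; congr 1; funext n
    rw [hf]; dsimp only
    have he : (-(1/2):ℝ) * 2 = -1 := by norm_num
    rw [← ENNReal.rpow_mul, he, ENNReal.rpow_neg_one]
  have hR : ∑' n, (g n ^ (2:ℝ)) = ∑' n, w n * (‖(a : ℤ → ℂ) n‖₊ : ℝ≥0∞) ^ (2:ℝ) := by
    congr 1; funext n
    rw [hg]; dsimp only
    have he : ((1/2):ℝ) * 2 = 1 := by norm_num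
    rw [ENNReal.mul_rpow_of_nonneg _ _ (by norm_num : (0:ℝ) ≤ 2), ← ENNReal.rpow_mul, he,
      ENNReal.rpow_one]
  calc ∑' n, (‖(a : ℤ → ℂ) n‖₊ : ℝ≥0∞) = ∑' n, (f * g) n := by
        congr 1; funext n; exact hfg n
    _ ≤ (∑' n, f n ^ (2:ℝ)) ^ (1/2:ℝ) * (∑' n, g n ^ (2:ℝ)) ^ (1/2:ℝ) := H
    _ = S ^ (1/2:ℝ) * eLpNorm (a : ℤ → ℂ) 2 sobolevWeight := by
        rw [hL, hR, sq_tsum]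

noncomputable def K : ℝ := (S ^ (1/2:ℝ)).toReal

lemma bound_ne_top (a : H1Torus) :
    S ^ (1/2:ℝ) * eLpNorm (a : ℤ → ℂ) 2 sobolevWeight ≠ ⊤ :=
  ENNReal.mul_ne_top (ENNReal.rpow_ne_top_of_nonneg (by norm_num) S_ne_top) (Lp.eLpNorm_ne_top a)

lemma summable_coords (a : H1Torus) : Summable fun n => ‖(a : ℤ → ℂ) n‖ := by
  have hne : ∑' n, (‖(a : ℤ → ℂ) n‖₊ : ℝ≥0∞) ≠ ⊤ :=
    ne_top_of_le_ne_top (bound_ne_top a) (tsum_nnnorm_le a)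
  have := ENNReal.tsum_coe_ne_top_iff_summable.mp hne
  rw [← NNReal.summable_coe] at this
  simpa using this

lemma tsum_norm_le (a : H1Torus) : ∑' n, ‖(a : ℤ → ℂ) n‖ ≤ K * ‖a‖ := by
  have h := tsum_nnnorm_le a
  have h2 := ENNReal.toReal_mono (bound_ne_top a) h
  rw [ENNReal.toReal_mul] at h2
  rw [Lp.norm_def]
  calc ∑' n, ‖(a : ℤ → ℂ) n‖
      = (∑' n, (‖(a : ℤ → ℂ) n‖₊ : ℝ≥0∞)).toReal := by
        rw [ENNReal.tsum_toReal_eq (fun n => ENNReal.coe_ne_top)]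
        simp
    _ ≤ K * (eLpNorm (a : ℤ → ℂ) 2 sobolevWeight).toReal := h2

lemma sobolev_singleton (n : ℤ) : sobolevWeight {n} = w n := by
  rw [sobolevWeight, withDensity_apply _ (measurableSet_singleton n), lintegral_singleton,
    Measure.count_singleton, mul_one]
  rfl

lemma sobolev_ae {p : ℤ → Prop} (h : ∀ᵐ n ∂sobolevWeight, p n) : ∀ n, p n := by
  intro n
  by_contra hn
  have h1 : sobolevWeight {m | ¬ p m} = 0 := h
  have h2 : sobolevWeight {n} ≤ sobolevWeight {m | ¬ p m} :=
    measure_mono (by simpa using hn)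
  rw [sobolev_singleton, h1] at h2
  exact w_ne_zero n (le_antisymm h2 (by positivity))

lemma coords_inj {a b : H1Torus} (h : ∀ n, (a : ℤ → ℂ) n = (b : ℤ → ℂ) n) : a = b :=
  Lp.ext (Filter.Eventually.of_forall h)

lemma coe_add (a b : H1Torus) (n : ℤ) : ((a + b : H1Torus) : ℤ → ℂ) n = (a : ℤ → ℂ) n + (b : ℤ → ℂ) n := by
  have := sobolev_ae (Lp.coeFn_add a b)
  exact this n

lemma coe_smul (c : ℂ) (a : H1Torus) (n : ℤ) : ((c • a : H1Torus) : ℤ → ℂ) n = c • (a : ℤ → ℂ) n := by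
  have := sobolev_ae (Lp.coeFn_smul c a)
  exact this n


-- characters

noncomputable def ch (θ : ℝ) (n : ℤ) : ℂ := Complex.exp ((θ * n) * Complex.I)

lemma norm_ch (θ : ℝ) (n : ℤ) : ‖ch θ n‖ = 1 := by
  rw [ch, Complex.norm_exp]
  simp

lemma summable_mul_ch (a : H1Torus) (θ : ℝ) :
    Summable fun n => (a : ℤ → ℂ) n * ch θ n := by
  apply Summable.of_norm
  apply Summable.congr (summable_coords a)
  intro n
  rw [norm_mul, norm_ch, mul_one]

noncomputable def Φ (θ : ℝ) : H1Torus →L[ℂ] ℂ :=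
  LinearMap.mkContinuous
    { toFun := fun a => ∑' n, (a : ℤ → ℂ) n * ch θ n
      map_add' := by
        intro a b
        rw [tsum_congr (fun n => by rw [coe_add, add_mul])]
        exact Summable.tsum_add (summable_mul_ch a θ) (summable_mul_ch b θ)
      map_smul' := by
        intro m a
        simp only [RingHom.id_apply]
        rw [tsum_congr (fun n => by rw [coe_smul, smul_eq_mul, mul_assoc]), tsum_mul_left, smul_eq_mul] }
    K
    (by
      intro a
      simp only [LinearMap.coe_mk, AddHom.coe_mk]
      calc ‖∑' n, (a : ℤ → ℂ) n * ch θ n‖ ≤ ∑' n, ‖(a : ℤ → ℂ) n * ch θ n‖ := by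
            apply norm_tsum_le_tsum_norm
            apply Summable.congr (summable_coords a)
            intro n; rw [norm_mul, norm_ch, mul_one]
        _ = ∑' n, ‖(a : ℤ → ℂ) n‖ := by
            exact tsum_congr fun n => by rw [norm_mul, norm_ch, mul_one]
        _ ≤ K * ‖a‖ := tsum_norm_le a)

lemma Φ_apply (θ : ℝ) (a : H1Torus) : Φ θ a = ∑' n, (a : ℤ → ℂ) n * ch θ n := rfl

-- basis vectors
noncomputable def eF (m : ℤ) : ℤ → ℂ := fun n => if n = m then 1 else 0

lemma memℒp_eF (m : ℤ) : MemLp (eF m) 2 sobolevWeight := by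
  refine ⟨(measurable_of_countable _).aestronglyMeasurable, ?_⟩
  rw [sq_tsum]
  have : ∑' n, w n * (‖eF m n‖₊ : ℝ≥0∞) ^ (2:ℝ) = w m := by
    rw [tsum_eq_single m]
    · simp [eF]
    · intro n hn
      simp [eF, hn]
  rw [this]
  exact ENNReal.rpow_lt_top_of_nonneg (by norm_num) (w_ne_top m)

noncomputable def e (m : ℤ) : H1Torus := (memℒp_eF m).toLp (eF m)

lemma e_coords (m n : ℤ) : (e m : ℤ → ℂ) n = if n = m then 1 else 0 :=
  sobolev_ae (MemLp.coeFn_toLp (memℒp_eF m)) n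

lemma Φ_e (θ : ℝ) (m : ℤ) : Φ θ (e m) = ch θ m := by
  rw [Φ_apply, tsum_eq_single m]
  · rw [e_coords]; simp
  · intro n hn; rw [e_coords]; simp [hn]

-- inner products and density
lemma inner_e (a : H1Torus) (m : ℤ) :
    (inner ℂ (e m) a : ℂ) = ((w m).toReal : ℂ) * (a : ℤ → ℂ) m := by
  rw [L2.inner_def]
  have hF : (fun n => (inner ℂ ((e m : ℤ → ℂ) n) ((a : ℤ → ℂ) n) : ℂ))
      = Set.indicator {m} (fun n => (a : ℤ → ℂ) n) := by
    funext n
    by_cases hn : n = m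
    · subst hn
      simp [e_coords, RCLike.inner_apply]
    · simp [e_coords, hn, RCLike.inner_apply, Set.indicator_of_notMem]
  rw [hF, integral_indicator (measurableSet_singleton m), integral_singleton,
    measureReal_def, sobolev_singleton]
  rw [Complex.real_smul]

lemma dense_span : Dense (↑(Submodule.span ℂ (Set.range e)) : Set H1Torus) := by
  rw [Submodule.dense_iff_topologicalClosure_eq_top, Submodule.topologicalClosure_eq_top_iff]
  rw [Submodule.eq_bot_iff]
  intro a ha
  have h0 : ∀ m, (a : ℤ → ℂ) m = 0 := by
    intro m
    have h1 : (inner ℂ (e m) a : ℂ) = 0 :=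
      (Submodule.mem_orthogonal _ a).mp ha (e m) (Submodule.subset_span ⟨m, rfl⟩)
    rw [inner_e] at h1
    have hw : ((w m).toReal : ℂ) ≠ 0 := by
      simp only [ne_eq, Complex.ofReal_eq_zero]
      exact (ENNReal.toReal_pos (w_ne_zero m) (w_ne_top m)).ne'
    exact (mul_eq_zero.mp h1).resolve_left hw
  apply coords_inj
  intro n
  rw [h0 n]
  exact (sobolev_ae (Lp.coeFn_zero ℂ 2 sobolevWeight) n).symm

lemma CLM_ext {T T' : H1Torus →L[ℂ] ℂ} (h : ∀ m, T (e m) = T' (e m)) : T = T' := by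
  apply ContinuousLinearMap.ext_on dense_span
  rintro _ ⟨m, rfl⟩
  exact h m


end MzAux

open MzAux in
/-- on the torus `𝕋`, the multiplication operator `M_z` (which, in the
Fourier realization of `H¹(𝕋)` as the weighted space `ℓ²(ℤ, (1+n²))`, is the shift
`(M_z a)ₙ = a_{n-1}`) is not the exponential of any bounded operator `X` on `H¹(𝕋)` that
is antihermitian for the `L²` inner product `⟨a, b⟩_{L²} = ∑ₙ conj(aₙ) bₙ`. -/
theorem Mz_not_exponential_of_L2_antihermitian :
    ¬ ∃ X : H1Torus →L[ℂ] H1Torus,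
        (∀ a b : H1Torus,
          (∑' n : ℤ, starRingEnd ℂ ((X a : ℤ → ℂ) n) * (b : ℤ → ℂ) n)
            = - ∑' n : ℤ, starRingEnd ℂ ((a : ℤ → ℂ) n) * ((X b : ℤ → ℂ) n)) ∧
        (∀ (a : H1Torus) (n : ℤ),
          ((NormedSpace.exp X) a : ℤ → ℂ) n = (a : ℤ → ℂ) (n - 1)) := by
  rintro ⟨X, hX, hS⟩
  set Sh := NormedSpace.exp X with hSh
  -- X commutes with its exponential
  have hcomm : ∀ v : H1Torus, X (Sh v) = Sh (X v) := by
    intro v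
    have h := ((Commute.refl X).exp_right)
    calc X (Sh v) = (X * Sh) v := rfl
      _ = (Sh * X) v := by rw [h.eq]
      _ = Sh (X v) := rfl
  -- shift of basis vectors
  have hstep : ∀ m : ℤ, e (m + 1) = Sh (e m) := by
    intro m
    apply coords_inj
    intro n
    rw [hS, e_coords, e_coords]
    have : n - 1 = m ↔ n = m + 1 := by omega
    simp only [this]
  set c : H1Torus := X (e 0) with hc
  -- matrix coefficients of X
  have Xe : ∀ m n : ℤ, (X (e m) : ℤ → ℂ) n = (c : ℤ → ℂ) (n - m) := by
    intro m
    induction m using Int.induction_on with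
    | zero => intro n; rw [hc]; norm_num
    | succ k ih =>
        intro n
        rw [hstep k, hcomm, hS, ih (n - 1)]
        congr 1; omega
    | pred k ih =>
        intro n
        have h1 : (X (e (-k)) : ℤ → ℂ) (n + 1) = (X (e (-k - 1)) : ℤ → ℂ) n := by
          have h2 : e (-k) = Sh (e (-k - 1)) := by
            have := hstep (-k - 1)
            rwa [show (-k - 1 + 1 : ℤ) = -k by ring] at this
          rw [h2, hcomm, hS]
          norm_num
        rw [← h1, ih (n + 1)]
        congr 1; omega
  -- antihermitian symmetry of c
  have hanti : ∀ k : ℤ, starRingEnd ℂ ((c : ℤ → ℂ) k) = - (c : ℤ → ℂ) (-k) := by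
    intro k
    have h := hX (e 0) (e k)
    have hL : (∑' n : ℤ, starRingEnd ℂ ((X (e 0) : ℤ → ℂ) n) * ((e k : H1Torus) : ℤ → ℂ) n)
        = starRingEnd ℂ ((c : ℤ → ℂ) k) := by
      rw [tsum_eq_single k]
      · rw [e_coords, hc]; simp
      · intro n hn; rw [e_coords]; simp [hn]
    have hR : (∑' n : ℤ, starRingEnd ℂ (((e 0 : H1Torus)) n) * ((X (e k) : ℤ → ℂ) n))
        = (c : ℤ → ℂ) (-k) := by
      rw [tsum_eq_single 0]
      · rw [e_coords, Xe]; simp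
      · intro n hn; rw [e_coords]; simp [hn]
    rw [hL, hR] at h
    exact h
  -- the symbol f
  set f : ℝ → ℂ := fun θ => Φ θ c with hf
  -- the key intertwining identity
  have hkey : ∀ (θ : ℝ) (a : H1Torus), Φ θ (X a) = f θ * Φ θ a := by
    intro θ
    have : (Φ θ).comp X = f θ • Φ θ := by
      apply CLM_ext
      intro m
      rw [ContinuousLinearMap.comp_apply, ContinuousLinearMap.smul_apply, smul_eq_mul, Φ_e,
        Φ_apply]
      have h1 : ∀ n : ℤ, (X (e m) : ℤ → ℂ) n * ch θ n
          = (fun k : ℤ => (c : ℤ → ℂ) k * ch θ k * ch θ m) (n - m) := by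
        intro n
        rw [Xe]
        dsimp only
        rw [mul_assoc]
        congr 1
        rw [ch, ch, ch, ← Complex.exp_add]
        congr 1
        push_cast
        ring
      calc ∑' (n : ℤ), (X (e m) : ℤ → ℂ) n * ch θ n
          = ∑' (n : ℤ), (fun k : ℤ => (c : ℤ → ℂ) k * ch θ k * ch θ m)
              ((Equiv.subRight m) n) := tsum_congr h1
        _ = ∑' k, (c : ℤ → ℂ) k * ch θ k * ch θ m :=
              (Equiv.subRight m).tsum_eq (fun k : ℤ => (c : ℤ → ℂ) k * ch θ k * ch θ m)
        _ = f θ * ch θ m := by rw [tsum_mul_right]; simp only [hf, Φ_apply]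
    intro a
    have := congrArg (fun T : H1Torus →L[ℂ] ℂ => T a) this
    simpa using this
  -- powers
  have hpow : ∀ (θ : ℝ) (k : ℕ) (a : H1Torus), Φ θ ((X ^ k) a) = (f θ) ^ k * Φ θ a := by
    intro θ k
    induction k with
    | zero => intro a; simp
    | succ k ih =>
        intro a
        calc Φ θ ((X ^ (k+1)) a) = Φ θ (X ((X ^ k) a)) := by rw [pow_succ']; rfl
          _ = f θ * Φ θ ((X ^ k) a) := hkey θ _
          _ = f θ * ((f θ) ^ k * Φ θ a) := by rw [ih]
          _ = (f θ) ^ (k+1) * Φ θ a := by ring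
  -- the exponential identity
  have hexp : ∀ θ : ℝ, Φ θ (Sh (e 0)) = Complex.exp (f θ) := by
    intro θ
    have hsum : Summable (fun k : ℕ => ((k.factorial : ℂ))⁻¹ • X ^ k) :=
      NormedSpace.expSeries_summable' X
    have h0 : Sh (e 0) = ∑' k : ℕ, (((k.factorial : ℂ))⁻¹ • X ^ k) (e 0) := by
      rw [hSh, NormedSpace.exp_eq_tsum ℂ]
      exact (ContinuousLinearMap.apply ℂ H1Torus (e 0)).map_tsum hsum
    have h1 : Summable fun k : ℕ => (((k.factorial : ℂ))⁻¹ • X ^ k) (e 0) :=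
      hsum.map (ContinuousLinearMap.apply ℂ H1Torus (e 0)).toLinearMap.toAddMonoidHom
        (ContinuousLinearMap.apply ℂ H1Torus (e 0)).continuous
    rw [h0, (Φ θ).map_tsum h1]
    have h2 : ∀ k : ℕ, Φ θ ((((k.factorial : ℂ))⁻¹ • X ^ k) (e 0))
        = ((k.factorial : ℂ))⁻¹ • ((f θ) ^ k) := by
      intro k
      rw [ContinuousLinearMap.smul_apply, ContinuousLinearMap.map_smul, hpow θ k, Φ_e]
      simp [ch]
    rw [tsum_congr h2, Complex.exp_eq_exp_ℂ, NormedSpace.exp_eq_tsum ℂ]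
  have hexp2 : ∀ θ : ℝ, Complex.exp (f θ) = Complex.exp (θ * Complex.I) := by
    intro θ
    rw [← hexp θ]
    have h3 : Sh (e 0) = e 1 := by
      have := hstep 0; rw [zero_add] at this; exact this.symm
    rw [h3, Φ_e, ch]
    try norm_num
  -- conjugation symmetry
  have ch_conj : ∀ (θ : ℝ) (n : ℤ), starRingEnd ℂ (ch θ n) = ch θ (-n) := by
    intro θ n
    rw [ch, ch, ← Complex.exp_conj]
    congr 1
    simp only [map_mul, Complex.conj_ofReal, Complex.conj_I, map_intCast]
    push_cast
    ring
  have hconj : ∀ θ : ℝ, starRingEnd ℂ (f θ) = - f θ := by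
    intro θ
    have h1 : starRingEnd ℂ (f θ) = ∑' n : ℤ, starRingEnd ℂ ((c : ℤ → ℂ) n * ch θ n) := by
      simp only [hf, Φ_apply]
      exact tsum_star
    have h2 : ∀ n : ℤ, starRingEnd ℂ ((c : ℤ → ℂ) n * ch θ n)
        = (fun k : ℤ => - ((c : ℤ → ℂ) k * ch θ k)) ((Equiv.neg ℤ) n) := by
      intro n
      simp only [Equiv.neg_apply, map_mul]
      rw [hanti n, ch_conj]
      ring
    calc starRingEnd ℂ (f θ)
        = ∑' n : ℤ, (fun k : ℤ => - ((c : ℤ → ℂ) k * ch θ k)) ((Equiv.neg ℤ) n) := by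
          rw [h1]; exact tsum_congr h2
      _ = ∑' k : ℤ, - ((c : ℤ → ℂ) k * ch θ k) :=
          (Equiv.neg ℤ).tsum_eq (fun k : ℤ => - ((c : ℤ → ℂ) k * ch θ k))
      _ = - f θ := by rw [tsum_neg]; simp only [hf, Φ_apply]
  have hre : ∀ θ : ℝ, (f θ).re = 0 := by
    intro θ
    have h2 := congrArg Complex.re (hconj θ)
    simp only [Complex.conj_re, Complex.neg_re] at h2
    linarith
  -- continuity of f
  have hcont : Continuous f := by
    have hc2 : Continuous fun θ : ℝ => ∑' n : ℤ, (c : ℤ → ℂ) n * ch θ n := by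
      apply continuous_tsum (u := fun n => ‖(c : ℤ → ℂ) n‖)
      · intro n
        apply Continuous.mul continuous_const
        unfold ch
        fun_prop
      · exact summable_coords c
      · intro n θ; rw [norm_mul, norm_ch, mul_one]
    have : f = fun θ : ℝ => ∑' n : ℤ, (c : ℤ → ℂ) n * ch θ n := by
      funext θ; simp only [hf, Φ_apply]
    rw [this]; exact hc2
  -- periodicity
  have hper : f (2 * Real.pi) = f 0 := by
    simp only [hf, Φ_apply]
    apply tsum_congr
    intro n
    congr 1
    rw [ch, ch]
    rw [show (((2 * Real.pi : ℝ)) : ℂ) * n * Complex.I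
        = ((0:ℝ) : ℂ) * n * Complex.I + n * (2 * Real.pi * Complex.I) by push_cast; ring]
    rw [Complex.exp_add, Complex.exp_int_mul_two_pi_mul_I, mul_one]
  -- winding-number contradiction
  have hpi : (0:ℝ) < 2 * Real.pi := by positivity
  set g : ℝ → ℝ := fun θ => ((f θ).im - θ) / (2 * Real.pi) with hg
  have hint : ∀ θ : ℝ, ∃ n : ℤ, g θ = n := by
    intro θ
    have h1 : Complex.exp (f θ - θ * Complex.I) = 1 := by
      rw [Complex.exp_sub, hexp2 θ, div_self (Complex.exp_ne_zero _)]
    obtain ⟨n, hn⟩ := Complex.exp_eq_one_iff.mp h1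
    refine ⟨n, ?_⟩
    have h2 := congrArg Complex.im hn
    simp only [Complex.sub_im, Complex.mul_im, Complex.ofReal_re, Complex.ofReal_im,
      Complex.I_re, Complex.I_im, Complex.intCast_re, Complex.intCast_im, mul_one, mul_zero,
      zero_mul, add_zero, zero_add, Complex.mul_re, sub_zero, Complex.re_ofNat,
      Complex.im_ofNat] at h2
    rw [hg]
    field_simp
    linarith
  have hcont_g : Continuous g := by
    rw [hg]
    exact ((Complex.continuous_im.comp hcont).sub continuous_id).div_const _
  obtain ⟨k0, hk0⟩ := hint 0
  have hg0 : (f 0).im = k0 * (2 * Real.pi) := by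
    rw [hg] at hk0
    field_simp at hk0
    linarith
  have hg2 : g (2 * Real.pi) = (k0 : ℝ) - 1 := by
    rw [hg]
    simp only [hper, hg0]
    field_simp
  have hmid : ∃ x ∈ Set.Icc (0:ℝ) (2 * Real.pi), g x = (k0 : ℝ) - 1/2 := by
    have hsub := intermediate_value_Icc' (le_of_lt hpi) hcont_g.continuousOn
    have hmem : (k0 : ℝ) - 1/2 ∈ Set.Icc (g (2 * Real.pi)) (g 0) := by
      rw [hg2, hk0]
      constructor <;> linarith
    obtain ⟨x, hx, hgx⟩ := hsub hmem
    exact ⟨x, hx, hgx⟩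
  obtain ⟨x, _, hgx⟩ := hmid
  obtain ⟨m, hm⟩ := hint x
  have hcast : ((2 * m : ℤ) : ℝ) = ((2 * k0 - 1 : ℤ) : ℝ) := by
    push_cast
    rw [hm] at hgx
    linarith
  have := Int.cast_injective hcast
  omega
end
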